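/- Equivalence of the partial-inverse conditions on E and on Y: if |U_E| ≤ n − k_max, then a polynomial Λ(x) with deg Λ(x) ≤ |U_E| satisfies deg(E⁽ⁱ⁾(x)Λ(x) mod m(x)) < k⁽ⁱ⁾ + |U_E| for all i if and only if it satisfies deg(Y⁽ⁱ⁾(x)Λ(x) mod m(x)) < k⁽ⁱ⁾ + |U_E| for all i; consequently the minimal-degree nonzero solutions of the two families of conditions coincide. -/

import Mathlib

open Polynomial

/-- Equivalence of the partial-inverse conditions on `E` and on `Y = C + E`:
if `|U_E| ≤ n − k_max`, then for `Λ` with `deg Λ ≤ |U_E|` the conditions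
`deg(E⁽ⁱ⁾ Λ mod m) < k⁽ⁱ⁾ + |U_E|` (all `i`) and
`deg(Y⁽ⁱ⁾ Λ mod m) < k⁽ⁱ⁾ + |U_E|` (all `i`) are equivalent; consequently the
minimal-degree nonzero solutions of the two SPI problems coincide. -/
theorem partialInverse_condition_E_iff_Y {F : Type*} [Field F] {L n : ℕ}
    (β : Fin n → F) (hβ : Function.Injective β)
    (c E : Fin L → F[X]) (k : Fin L → ℕ)
    (hc : ∀ i, (c i).degree < (k i : WithBot ℕ))
    (hkn : ∀ i, k i < n)
    (hE : ∀ i, (E i).degree < (n : WithBot ℕ))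
    (U : Finset (Fin n))
    (hU : ∀ ℓ, ℓ ∈ U ↔ ∃ i, (E i).eval (β ℓ) ≠ 0)
    (hcard : U.card ≤ n - Finset.univ.sup k) :
    (∀ Λ : F[X], Λ.degree ≤ (U.card : WithBot ℕ) →
      ((∀ i, ((E i) * Λ % (∏ ℓ, (X - C (β ℓ)))).degree < ((k i + U.card : ℕ) : WithBot ℕ)) ↔
       (∀ i, ((c i + E i) * Λ % (∏ ℓ, (X - C (β ℓ)))).degree < ((k i + U.card : ℕ) : WithBot ℕ)))) ∧
    (∀ Λ : F[X],
      (Λ ≠ 0 ∧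
        (∀ i, ((E i) * Λ % (∏ ℓ, (X - C (β ℓ)))).degree < ((k i + U.card : ℕ) : WithBot ℕ)) ∧
        (∀ g : F[X], g ≠ 0 →
          (∀ i, ((E i) * g % (∏ ℓ, (X - C (β ℓ)))).degree < ((k i + U.card : ℕ) : WithBot ℕ)) →
          Λ.degree ≤ g.degree)) ↔
      (Λ ≠ 0 ∧
        (∀ i, ((c i + E i) * Λ % (∏ ℓ, (X - C (β ℓ)))).degree < ((k i + U.card : ℕ) : WithBot ℕ)) ∧
        (∀ g : F[X], g ≠ 0 →
          (∀ i, ((c i + E i) * g % (∏ ℓ, (X - C (β ℓ)))).degree < ((k i + U.card : ℕ) : WithBot ℕ)) →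
          Λ.degree ≤ g.degree))) := by
  classical
  set m : F[X] := ∏ ℓ, (X - C (β ℓ)) with hm_def
  have hm : m.Monic := monic_prod_of_monic _ _ fun ℓ _ => monic_X_sub_C _
  have hdegm : m.degree = (n : WithBot ℕ) := by
    rw [hm_def, degree_prod]; simp [degree_X_sub_C]
  have hmod : ∀ p : F[X], p % m = p %ₘ m := fun p => by
    rw [Polynomial.mod_def, hm.leadingCoeff, inv_one, map_one, mul_one]
  have hsup : Finset.univ.sup k ≤ n := Finset.sup_le fun i _ => (hkn i).le
  have hkcard : ∀ i, k i + U.card ≤ n := by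
    intro i
    have h1 : k i ≤ Finset.univ.sup k := Finset.le_sup (Finset.mem_univ i)
    omega
  have hclow : ∀ i (Λ : F[X]), Λ.degree ≤ (U.card : WithBot ℕ) →
      ((c i) * Λ).degree < ((k i + U.card : ℕ) : WithBot ℕ) := by
    intro i Λ hΛ
    refine lt_of_le_of_lt (degree_mul_le _ _) ?_
    rw [Nat.cast_add]
    by_cases h0 : Λ.degree = ⊥
    · rw [h0, WithBot.add_bot]; exact bot_lt_iff_ne_bot.2 (by simp)
    · exact WithBot.add_lt_add_of_lt_of_le h0 (hc i) hΛ
  have hsplit : ∀ i (Λ : F[X]), Λ.degree ≤ (U.card : WithBot ℕ) →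
      ((c i + E i) * Λ) % m = c i * Λ + (E i * Λ) % m := by
    intro i Λ hΛ
    rw [add_mul, hmod, hmod, Polynomial.add_modByMonic]
    congr 1
    apply (Polynomial.modByMonic_eq_self_iff hm).2
    rw [hdegm]
    exact lt_of_lt_of_le (hclow i Λ hΛ) (by exact_mod_cast hkcard i)
  have hiff : ∀ (Λ : F[X]), Λ.degree ≤ (U.card : WithBot ℕ) → ∀ i,
      ((((E i) * Λ) % m).degree < ((k i + U.card : ℕ) : WithBot ℕ) ↔
       (((c i + E i) * Λ) % m).degree < ((k i + U.card : ℕ) : WithBot ℕ)) := by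
    intro Λ hΛ i
    rw [hsplit i Λ hΛ]
    have hA := hclow i Λ hΛ
    constructor
    · intro h
      exact lt_of_le_of_lt (degree_add_le _ _) (max_lt hA h)
    · intro h
      have heq : (E i * Λ) % m = (c i * Λ + (E i * Λ) % m) - c i * Λ := by ring
      rw [heq]
      exact lt_of_le_of_lt (degree_sub_le _ _) (max_lt h hA)
  have part1 : ∀ Λ : F[X], Λ.degree ≤ (U.card : WithBot ℕ) →
      ((∀ i, ((E i) * Λ % m).degree < ((k i + U.card : ℕ) : WithBot ℕ)) ↔
       (∀ i, ((c i + E i) * Λ % m).degree < ((k i + U.card : ℕ) : WithBot ℕ))) := by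
    intro Λ hΛ
    exact forall_congr' (hiff Λ hΛ)
  refine ⟨part1, ?_⟩
  -- the special solution Λ_E
  set ΛE : F[X] := ∏ ℓ ∈ U, (X - C (β ℓ)) with hΛE_def
  have hΛEmonic : ΛE.Monic := monic_prod_of_monic _ _ fun ℓ _ => monic_X_sub_C _
  have hΛEne : ΛE ≠ 0 := hΛEmonic.ne_zero
  have hΛEdeg : ΛE.degree = (U.card : WithBot ℕ) := by
    rw [hΛE_def, degree_prod]; simp [degree_X_sub_C]
  have hΛEcond : ∀ i, ((E i) * ΛE % m).degree < ((k i + U.card : ℕ) : WithBot ℕ) := by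
    intro i
    have hdvd : m ∣ E i * ΛE := by
      rw [hm_def]
      refine Finset.prod_dvd_of_coprime (fun a _ b _ hab => ?_) (fun ℓ _ => ?_)
      · exact pairwise_coprime_X_sub_C hβ hab
      · rw [dvd_iff_isRoot]
        by_cases hℓ : ℓ ∈ U
        · have hz : ΛE.eval (β ℓ) = 0 := by
            rw [hΛE_def, eval_prod]
            exact Finset.prod_eq_zero hℓ (by simp)
          simp [IsRoot, hz]
        · have hE0 : (E i).eval (β ℓ) = 0 := by
            by_contra h
            exact hℓ ((hU ℓ).2 ⟨i, h⟩)
          simp [IsRoot, hE0]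
    rw [hmod, (Polynomial.modByMonic_eq_zero_iff_dvd hm).2 hdvd, degree_zero]
    exact bot_lt_iff_ne_bot.2 (by exact_mod_cast WithBot.coe_ne_bot)
  have hΛEcond' : ∀ i, ((c i + E i) * ΛE % m).degree < ((k i + U.card : ℕ) : WithBot ℕ) :=
    (part1 ΛE hΛEdeg.le).1 hΛEcond
  intro Λ
  constructor
  · rintro ⟨hne, hcond, hmin⟩
    have hΛdeg : Λ.degree ≤ (U.card : WithBot ℕ) := by
      rw [← hΛEdeg]; exact hmin ΛE hΛEne hΛEcond
    refine ⟨hne, (part1 Λ hΛdeg).1 hcond, fun g hg hgcond => ?_⟩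
    rcases le_or_gt g.degree (U.card : WithBot ℕ) with hle | hlt
    · exact hmin g hg ((part1 g hle).2 hgcond)
    · exact le_trans hΛdeg hlt.le
  · rintro ⟨hne, hcond, hmin⟩
    have hΛdeg : Λ.degree ≤ (U.card : WithBot ℕ) := by
      rw [← hΛEdeg]; exact hmin ΛE hΛEne hΛEcond'
    refine ⟨hne, (part1 Λ hΛdeg).2 hcond, fun g hg hgcond => ?_⟩
    rcases le_or_gt g.degree (U.card : WithBot ℕ) with hle | hlt
    · exact hmin g hg ((part1 g hle).1 hgcond)
    · exact le_trans hΛdeg hlt.le
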